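/- Consider the vertex-reinforced random walk X on ℤ with nondecreasing weight w : ℕ → (0,∞), starting at X_0 = 0, with transition probabilities P(X_{n+1} = X_n ± 1 | F_n) = w(Z_n(X_n ± 1)) / (w(Z_n(X_n+1)) + w(Z_n(X_n−1))), where Z_n(x) is the number of visits of x up to time n. Define the process M_n recursively by M_0 = 0, with Δ_0(z) = 1 for z < 0, and: if X_{n+1} = X_n − 1 then M_{n+1} = M_n − a_{X_n} Δ_n(X_n − 1); if X_{n+1} = X_n + 1 then M_{n+1} = M_n + a_{X_n} Δ_n(X_n − 1) · w(Z_n(X_n−1))/w(Z_n(X_n+1)), and Δ_{n+1}(X_n) is set to this increment. Then (M_n) is a martingale with respect to the natural filtration of X. -/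

import Mathlib

open MeasureTheory Filter

/-- Number of visits of the walk `X` to site `x` up to time `n` (inclusive). -/
def visits {Ω : Type*} (X : ℕ → Ω → ℤ) (n : ℕ) (x : ℤ) (ω : Ω) : ℕ :=
  ((Finset.range (n+1)).filter (fun k => X k ω = x)).card

theorem visits_le {Ω : Type*} (X : ℕ → Ω → ℤ) (n : ℕ) (x : ℤ) (ω : Ω) :
    visits X n x ω ≤ n + 1 := by
  classical
  calc visits X n x ω ≤ (Finset.range (n+1)).card := Finset.card_filter_le _ _
  _ = n + 1 := Finset.card_range _

/-- The process `M` associated to the vertex-reinforced random walk on `ℤ` with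
nondecreasing weight `w` (via the increment processes `Δ`) is a martingale with respect
to the natural filtration of the walk. -/
theorem stmt9 {Ω : Type*} [m0 : MeasurableSpace Ω] (μ : Measure Ω) [IsProbabilityMeasure μ]
    (X : ℕ → Ω → ℤ) (hX : ∀ n, StronglyMeasurable (X n))
    (hX0 : ∀ ω, X 0 ω = 0)
    (hstep : ∀ n ω, X (n+1) ω = X n ω + 1 ∨ X (n+1) ω = X n ω - 1)
    (w : ℕ → ℝ) (hwpos : ∀ k, 0 < w k) (hwmono : Monotone w)
    (htransR : ∀ n,
      μ[Set.indicator {ω | X (n+1) ω = X n ω + 1} (fun _ => (1:ℝ)) |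
          (Filtration.natural X hX) n]
        =ᵐ[μ] fun ω => w (visits X n (X n ω + 1) ω) /
          (w (visits X n (X n ω + 1) ω) + w (visits X n (X n ω - 1) ω)))
    (htransL : ∀ n,
      μ[Set.indicator {ω | X (n+1) ω = X n ω - 1} (fun _ => (1:ℝ)) |
          (Filtration.natural X hX) n]
        =ᵐ[μ] fun ω => w (visits X n (X n ω - 1) ω) /
          (w (visits X n (X n ω + 1) ω) + w (visits X n (X n ω - 1) ω)))
    (a : ℤ → ℝ) (ha : ∀ x, 0 < a x ∧ a x ≤ 1)
    (Δ : ℕ → ℤ → Ω → ℝ) (hΔ0 : ∀ z ω, Δ 0 z ω = 1)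
    (hΔ : ∀ n z ω, Δ (n+1) z ω =
      if X (n+1) ω = X n ω + 1 ∧ z = X n ω then
        a (X n ω) * Δ n (X n ω - 1) ω *
          w (visits X n (X n ω - 1) ω) / w (visits X n (X n ω + 1) ω)
      else Δ n z ω)
    (M : ℕ → Ω → ℝ) (hM0 : ∀ ω, M 0 ω = 0)
    (hM : ∀ n ω, M (n+1) ω =
      if X (n+1) ω = X n ω + 1 then
        M n ω + a (X n ω) * Δ n (X n ω - 1) ω *
          w (visits X n (X n ω - 1) ω) / w (visits X n (X n ω + 1) ω)
      else M n ω - a (X n ω) * Δ n (X n ω - 1) ω) :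
    Martingale M (Filtration.natural X hX) μ := by
  classical
  set F := Filtration.natural X hX with hF
  -- measurability of the walk w.r.t. the filtration
  have hXm : ∀ {k n : ℕ}, k ≤ n → Measurable[F n] (X k) := by
    intro k n hkn
    exact ((Filtration.stronglyAdapted_natural hX k).mono (F.mono hkn)).measurable
  -- measurability of equality sets
  have hsetX : ∀ {k l n : ℕ} (c : ℤ), k ≤ n → l ≤ n →
      MeasurableSet[F n] {ω | X k ω = X l ω + c} := by
    intro k l n c hk hl
    have h1 : Measurable[F n] (fun ω => X k ω - (X l ω + c)) :=
      (hXm hk).sub ((hXm hl).add_const c)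
    have h2 : {ω | X k ω = X l ω + c} = (fun ω => X k ω - (X l ω + c)) ⁻¹' {0} := by
      ext ω; simp [sub_eq_zero]
    rw [h2]; exact h1 (measurableSet_singleton 0)
  -- measurability of visits at X n + c
  have hvis : ∀ (n : ℕ) (c : ℤ), Measurable[F n] (fun ω => visits X n (X n ω + c) ω) := by
    intro n c
    have h : (fun ω => visits X n (X n ω + c) ω)
        = fun ω => ∑ k ∈ Finset.range (n+1), if X k ω = X n ω + c then 1 else 0 := by
      funext ω; rw [visits, Finset.card_filter]
    rw [h]
    refine Finset.measurable_sum _ (fun k hk => ?_)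
    have hk' : k ≤ n := Nat.lt_succ_iff.mp (Finset.mem_range.mp hk)
    exact Measurable.ite (hsetX c hk' le_rfl) measurable_const measurable_const
  have hwvis : ∀ (n : ℕ) (c : ℤ),
      Measurable[F n] (fun ω => w (visits X n (X n ω + c) ω)) := by
    intro n c
    exact measurable_from_top.comp (hvis n c)
  -- measurability of Δ
  have hΔm : ∀ n z, Measurable[F n] (Δ n z) := by
    intro n
    induction n with
    | zero =>
        intro z
        have : Δ 0 z = fun _ => (1:ℝ) := funext (hΔ0 z)
        rw [this]; exact measurable_const
    | succ n ih =>
        intro z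
        have hΔx : Measurable[F n] (fun ω => Δ n (X n ω - 1) ω) := by
          letI mΩ : MeasurableSpace Ω := F n
          have h : Measurable (fun p : Ω × ℤ => Δ n (p.2 - 1) p.1) :=
            measurable_from_prod_countable_left (fun z => ih (z - 1))
          exact h.comp (measurable_id.prodMk (hXm le_rfl))
        have hax : Measurable[F n] (fun ω => a (X n ω)) :=
          measurable_from_top.comp (hXm le_rfl)
        have hwm : Measurable[F n] (fun ω => w (visits X n (X n ω - 1) ω)) := by
          have := hwvis n (-1); simpa [sub_eq_add_neg] using this
        have hwp := hwvis n 1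
        have hbr : Measurable[F n] (fun ω =>
            a (X n ω) * Δ n (X n ω - 1) ω *
              w (visits X n (X n ω - 1) ω) / w (visits X n (X n ω + 1) ω)) :=
          ((hax.mul hΔx).mul hwm).div hwp
        have heq : Δ (n+1) z = fun ω =>
            if X (n+1) ω = X n ω + 1 ∧ z = X n ω then
              a (X n ω) * Δ n (X n ω - 1) ω *
                w (visits X n (X n ω - 1) ω) / w (visits X n (X n ω + 1) ω)
            else Δ n z ω := funext (hΔ n z)
        rw [heq]
        have hset : MeasurableSet[F (n+1)] {ω | X (n+1) ω = X n ω + 1 ∧ z = X n ω} := by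
          have h1 : MeasurableSet[F (n+1)] {ω | X (n+1) ω = X n ω + 1} :=
            hsetX 1 le_rfl (Nat.le_succ n)
          have h2 : MeasurableSet[F (n+1)] {ω | z = X n ω} := by
            have : {ω | z = X n ω} = (X n) ⁻¹' {z} := by ext ω; simp [eq_comm]
            rw [this]; exact hXm (Nat.le_succ n) (measurableSet_singleton z)
          exact h1.inter h2
        exact Measurable.ite hset (hbr.mono (F.mono (Nat.le_succ n)) le_rfl)
          ((ih z).mono (F.mono (Nat.le_succ n)) le_rfl)
  have hΔx : ∀ n, Measurable[F n] (fun ω => Δ n (X n ω - 1) ω) := by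
    intro n
    letI mΩ : MeasurableSpace Ω := F n
    have h : Measurable (fun p : Ω × ℤ => Δ n (p.2 - 1) p.1) :=
      measurable_from_prod_countable_left (fun z => hΔm n (z - 1))
    exact h.comp (measurable_id.prodMk (hXm le_rfl))
  have hax : ∀ n, Measurable[F n] (fun ω => a (X n ω)) :=
    fun n => measurable_from_top.comp (hXm le_rfl)
  have hwmX : ∀ n, Measurable[F n] (fun ω => w (visits X n (X n ω - 1) ω)) := by
    intro n; have := hwvis n (-1); simpa [sub_eq_add_neg] using this
  -- measurability of M
  have hMm : ∀ n, Measurable[F n] (M n) := by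
    intro n
    induction n with
    | zero =>
        have : M 0 = fun _ => (0:ℝ) := funext hM0
        rw [this]; exact measurable_const
    | succ n ih =>
        have heq : M (n+1) = fun ω =>
            if X (n+1) ω = X n ω + 1 then
              M n ω + a (X n ω) * Δ n (X n ω - 1) ω *
                w (visits X n (X n ω - 1) ω) / w (visits X n (X n ω + 1) ω)
            else M n ω - a (X n ω) * Δ n (X n ω - 1) ω := funext (hM n)
        rw [heq]
        have hbr1 : Measurable[F n] (fun ω =>
            M n ω + a (X n ω) * Δ n (X n ω - 1) ω *
              w (visits X n (X n ω - 1) ω) / w (visits X n (X n ω + 1) ω)) :=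
          ih.add ((((hax n).mul (hΔx n)).mul (hwmX n)).div (hwvis n 1))
        have hbr2 : Measurable[F n] (fun ω =>
            M n ω - a (X n ω) * Δ n (X n ω - 1) ω) :=
          ih.sub ((hax n).mul (hΔx n))
        exact Measurable.ite (hsetX 1 le_rfl (Nat.le_succ n))
          (hbr1.mono (F.mono (Nat.le_succ n)) le_rfl)
          (hbr2.mono (F.mono (Nat.le_succ n)) le_rfl)
  -- bounds
  have hwle : ∀ (n : ℕ) (x : ℤ) (ω : Ω), w (visits X n x ω) ≤ w (n+1) :=
    fun n x ω => hwmono (visits_le X n x ω)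
  have hwge : ∀ (n : ℕ) (x : ℤ) (ω : Ω), w 0 ≤ w (visits X n x ω) :=
    fun n x ω => hwmono (Nat.zero_le _)
  have hratio : ∀ (n : ℕ) (ω : Ω),
      w (visits X n (X n ω - 1) ω) / w (visits X n (X n ω + 1) ω) ≤ w (n+1) / w 0 := by
    intro n ω
    exact div_le_div₀ (le_of_lt (hwpos (n+1))) (hwle n _ ω) (hwpos 0) (hwge n _ ω)
  have hratio0 : ∀ (n : ℕ) (ω : Ω),
      0 ≤ w (visits X n (X n ω - 1) ω) / w (visits X n (X n ω + 1) ω) :=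
    fun n ω => div_nonneg (le_of_lt (hwpos _)) (le_of_lt (hwpos _))
  have hΔbd : ∀ n, ∃ C : ℝ, 1 ≤ C ∧ ∀ z ω, |Δ n z ω| ≤ C := by
    intro n
    induction n with
    | zero => exact ⟨1, le_rfl, fun z ω => by rw [hΔ0]; simp⟩
    | succ n ih =>
        obtain ⟨C, hC1, hC⟩ := ih
        have hr1 : (1:ℝ) ≤ w (n+1) / w 0 :=
          (one_le_div (hwpos 0)).2 (hwmono (Nat.zero_le _))
        refine ⟨C * (w (n+1) / w 0), le_trans hC1
          (le_mul_of_one_le_right (le_trans zero_le_one hC1) hr1), ?_⟩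
        intro z ω
        rw [hΔ n z ω]
        by_cases h : X (n+1) ω = X n ω + 1 ∧ z = X n ω
        · rw [if_pos h]
          have h1 : |a (X n ω) * Δ n (X n ω - 1) ω| ≤ C := by
            rw [abs_mul]
            calc |a (X n ω)| * |Δ n (X n ω - 1) ω| ≤ 1 * C := by
                  apply mul_le_mul _ (hC _ _) (abs_nonneg _) zero_le_one
                  rw [abs_of_pos (ha (X n ω)).1]; exact (ha (X n ω)).2
            _ = C := one_mul C
          have heq : a (X n ω) * Δ n (X n ω - 1) ω *
              w (visits X n (X n ω - 1) ω) / w (visits X n (X n ω + 1) ω)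
              = (a (X n ω) * Δ n (X n ω - 1) ω) *
                (w (visits X n (X n ω - 1) ω) / w (visits X n (X n ω + 1) ω)) := by
            ring
          rw [heq, abs_mul]
          have h2 : |w (visits X n (X n ω - 1) ω) / w (visits X n (X n ω + 1) ω)|
              ≤ w (n+1) / w 0 := by
            rw [abs_of_nonneg (hratio0 n ω)]; exact hratio n ω
          exact mul_le_mul h1 h2 (abs_nonneg _) (le_trans zero_le_one hC1)
        · rw [if_neg h]
          exact le_trans (hC z ω) (le_mul_of_one_le_right (le_trans zero_le_one hC1) hr1)
  have hMbd : ∀ n, ∃ C : ℝ, ∀ ω, |M n ω| ≤ C := by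
    intro n
    induction n with
    | zero => exact ⟨0, fun ω => by rw [hM0]; simp⟩
    | succ n ih =>
        obtain ⟨C, hC⟩ := ih
        obtain ⟨D, hD1, hD⟩ := hΔbd n
        refine ⟨C + D * (w (n+1) / w 0), ?_⟩
        intro ω
        have hincR : |a (X n ω) * Δ n (X n ω - 1) ω *
            w (visits X n (X n ω - 1) ω) / w (visits X n (X n ω + 1) ω)|
            ≤ D * (w (n+1) / w 0) := by
          have h1 : |a (X n ω) * Δ n (X n ω - 1) ω| ≤ D := by
            rw [abs_mul]
            calc |a (X n ω)| * |Δ n (X n ω - 1) ω| ≤ 1 * D := by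
                  apply mul_le_mul _ (hD _ _) (abs_nonneg _) zero_le_one
                  rw [abs_of_pos (ha (X n ω)).1]; exact (ha (X n ω)).2
            _ = D := one_mul D
          have heq : a (X n ω) * Δ n (X n ω - 1) ω *
              w (visits X n (X n ω - 1) ω) / w (visits X n (X n ω + 1) ω)
              = (a (X n ω) * Δ n (X n ω - 1) ω) *
                (w (visits X n (X n ω - 1) ω) / w (visits X n (X n ω + 1) ω)) := by
            ring
          rw [heq, abs_mul]
          have h2 : |w (visits X n (X n ω - 1) ω) / w (visits X n (X n ω + 1) ω)|
              ≤ w (n+1) / w 0 := by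
            rw [abs_of_nonneg (hratio0 n ω)]; exact hratio n ω
          exact mul_le_mul h1 h2 (abs_nonneg _) (le_trans zero_le_one hD1)
        have hincL : |a (X n ω) * Δ n (X n ω - 1) ω| ≤ D * (w (n+1) / w 0) := by
          have h1 : |a (X n ω) * Δ n (X n ω - 1) ω| ≤ D := by
            rw [abs_mul]
            calc |a (X n ω)| * |Δ n (X n ω - 1) ω| ≤ 1 * D := by
                  apply mul_le_mul _ (hD _ _) (abs_nonneg _) zero_le_one
                  rw [abs_of_pos (ha (X n ω)).1]; exact (ha (X n ω)).2
            _ = D := one_mul D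
          have hr1 : (1:ℝ) ≤ w (n+1) / w 0 :=
            (one_le_div (hwpos 0)).2 (hwmono (Nat.zero_le _))
          exact le_trans h1 (le_mul_of_one_le_right (le_trans zero_le_one hD1) hr1)
        rw [hM n ω]
        by_cases h : X (n+1) ω = X n ω + 1
        · rw [if_pos h]
          calc |M n ω + a (X n ω) * Δ n (X n ω - 1) ω *
              w (visits X n (X n ω - 1) ω) / w (visits X n (X n ω + 1) ω)|
              ≤ |M n ω| + |a (X n ω) * Δ n (X n ω - 1) ω *
                w (visits X n (X n ω - 1) ω) / w (visits X n (X n ω + 1) ω)| := abs_add_le _ _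
          _ ≤ C + D * (w (n+1) / w 0) := add_le_add (hC ω) hincR
        · rw [if_neg h]
          calc |M n ω - a (X n ω) * Δ n (X n ω - 1) ω|
              ≤ |M n ω| + |a (X n ω) * Δ n (X n ω - 1) ω| := abs_sub _ _
          _ ≤ C + D * (w (n+1) / w 0) := add_le_add (hC ω) hincL
  -- integrability from boundedness and measurability
  have hint : ∀ (f : Ω → ℝ) (n : ℕ), Measurable[F n] f → (∃ C, ∀ ω, |f ω| ≤ C) →
      Integrable f μ := by
    rintro f n hf ⟨C, hC⟩
    refine Integrable.mono' (integrable_const C)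
      (hf.mono (F.le n) le_rfl).aestronglyMeasurable
      (ae_of_all _ fun ω => ?_)
    simpa [Real.norm_eq_abs] using hC ω
  have hMint : ∀ n, Integrable (M n) μ := fun n => hint (M n) n (hMm n) (hMbd n)
  -- the martingale property
  refine martingale_nat (fun n => (hMm n).stronglyMeasurable) hMint (fun n => ?_)
  -- notation for this step
  set g : Ω → ℝ := fun ω => a (X n ω) * Δ n (X n ω - 1) ω with hg
  set r : Ω → ℝ := fun ω =>
    w (visits X n (X n ω - 1) ω) / w (visits X n (X n ω + 1) ω) with hr
  set iR : Ω → ℝ := Set.indicator {ω | X (n+1) ω = X n ω + 1} (fun _ => (1:ℝ)) with hiR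
  set iL : Ω → ℝ := Set.indicator {ω | X (n+1) ω = X n ω - 1} (fun _ => (1:ℝ)) with hiL
  have hgm : Measurable[F n] g := (hax n).mul (hΔx n)
  have hrm : Measurable[F n] r := (hwmX n).div (hwvis n 1)
  obtain ⟨D, hD1, hD⟩ := hΔbd n
  have hgbd : ∀ ω, |g ω| ≤ D := by
    intro ω
    rw [hg]; rw [abs_mul]
    calc |a (X n ω)| * |Δ n (X n ω - 1) ω| ≤ 1 * D := by
          apply mul_le_mul _ (hD _ _) (abs_nonneg _) zero_le_one
          rw [abs_of_pos (ha (X n ω)).1]; exact (ha (X n ω)).2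
    _ = D := one_mul D
  have hrbd : ∀ ω, |r ω| ≤ w (n+1) / w 0 := by
    intro ω; rw [hr, abs_of_nonneg (hratio0 n ω)]; exact hratio n ω
  -- measurability of the indicator sets
  have hRset : MeasurableSet {ω | X (n+1) ω = X n ω + 1} :=
    (F.le (n+1)) _ (hsetX 1 le_rfl (Nat.le_succ n))
  have hLset : MeasurableSet {ω | X (n+1) ω = X n ω - 1} := by
    have := (F.le (n+1)) _ (hsetX (-1) le_rfl (Nat.le_succ n))
    simpa [sub_eq_add_neg] using this
  have hiRbd : ∀ ω, |iR ω| ≤ 1 := by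
    intro ω; rw [hiR]
    by_cases h : ω ∈ {ω | X (n+1) ω = X n ω + 1} <;> simp [Set.indicator_apply, h]
  have hiLbd : ∀ ω, |iL ω| ≤ 1 := by
    intro ω; rw [hiL]
    by_cases h : ω ∈ {ω | X (n+1) ω = X n ω - 1} <;> simp [Set.indicator_apply, h]
  have hiRm : Measurable iR := (measurable_const.indicator hRset)
  have hiLm : Measurable iL := (measurable_const.indicator hLset)
  have hiRint : Integrable iR μ := (integrable_const (1:ℝ)).indicator hRset
  have hiLint : Integrable iL μ := (integrable_const (1:ℝ)).indicator hLset
  -- decomposition of M (n+1)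
  have hdecomp : M (n+1) = fun ω => (M n ω + (g * r) ω * iR ω) - g ω * iL ω := by
    funext ω
    rcases hstep n ω with hR | hL
    · have hnL : ¬ (X (n+1) ω = X n ω - 1) := by
        rw [hR]; intro h; omega
      have h1 : iR ω = 1 := by rw [hiR]; simp [Set.indicator_apply, hR]
      have h2 : iL ω = 0 := by rw [hiL]; simp [Set.indicator_apply, hnL]
      rw [hM n ω, if_pos hR]
      simp only [h1, h2, Pi.mul_apply, mul_one, mul_zero, sub_zero]
      rw [hg, hr]; ring
    · have hnR : ¬ (X (n+1) ω = X n ω + 1) := by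
        rw [hL]; intro h; omega
      have h1 : iR ω = 0 := by rw [hiR]; simp [Set.indicator_apply, hnR]
      have h2 : iL ω = 1 := by rw [hiL]; simp [Set.indicator_apply, hL]
      rw [hM n ω, if_neg hnR]
      simp only [h1, h2, Pi.mul_apply, mul_zero, mul_one, add_zero]
      rfl
  -- integrabilities for the condexp computation
  have hgrm : Measurable[F n] (g * r) := hgm.mul hrm
  have hgrbd : ∀ ω, |(g * r) ω| ≤ D * (w (n+1) / w 0) := by
    intro ω
    rw [Pi.mul_apply, abs_mul]
    exact mul_le_mul (hgbd ω) (hrbd ω) (abs_nonneg _) (le_trans zero_le_one hD1)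
  have hgriRint : Integrable ((g * r) * iR) μ := by
    refine hint _ (n+1) ?_ ⟨D * (w (n+1) / w 0), ?_⟩
    · exact (hgrm.mono (F.mono (Nat.le_succ n)) le_rfl).mul
        (measurable_const.indicator (hsetX 1 le_rfl (Nat.le_succ n)))
    · intro ω
      rw [Pi.mul_apply, abs_mul]
      calc |(g * r) ω| * |iR ω| ≤ (D * (w (n+1) / w 0)) * 1 :=
            mul_le_mul (hgrbd ω) (hiRbd ω) (abs_nonneg _)
              (mul_nonneg (le_trans zero_le_one hD1)
                (div_nonneg (le_of_lt (hwpos _)) (le_of_lt (hwpos _))))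
      _ = D * (w (n+1) / w 0) := mul_one _
  have hgiLint : Integrable (g * iL) μ := by
    refine hint _ (n+1) ?_ ⟨D, ?_⟩
    · refine (hgm.mono (F.mono (Nat.le_succ n)) le_rfl).mul ?_
      have he : iL = Set.indicator {ω | X (n+1) ω = X n ω + (-1)} (fun _ => (1:ℝ)) := by
        rw [hiL]; simp only [sub_eq_add_neg]
      rw [he]
      exact measurable_const.indicator (hsetX (-1) le_rfl (Nat.le_succ n))
    · intro ω
      rw [Pi.mul_apply, abs_mul]
      calc |g ω| * |iL ω| ≤ D * 1 :=
            mul_le_mul (hgbd ω) (hiLbd ω) (abs_nonneg _) (le_trans zero_le_one hD1)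
      _ = D := mul_one _
  have hsum_int : Integrable (fun ω => M n ω + (g * r) ω * iR ω) μ := by
    have := (hMint n).add hgriRint
    exact this
  -- conditional expectation computation
  have hcond1 : μ[M (n+1) | F n]
      =ᵐ[μ] μ[fun ω => M n ω + (g * r) ω * iR ω | F n] - μ[g * iL | F n] := by
    rw [hdecomp]
    exact condExp_sub hsum_int hgiLint _
  have hcond2 : μ[fun ω => M n ω + (g * r) ω * iR ω | F n]
      =ᵐ[μ] μ[M n | F n] + μ[(g * r) * iR | F n] := by
    have := condExp_add (hMint n) hgriRint (m := F n)
    exact this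
  have hcondM : μ[M n | F n] = M n :=
    condExp_of_stronglyMeasurable (F.le n) (hMm n).stronglyMeasurable (hMint n)
  have hcondR : μ[(g * r) * iR | F n] =ᵐ[μ] (g * r) * μ[iR | F n] :=
    condExp_mul_of_stronglyMeasurable_left hgrm.stronglyMeasurable hgriRint hiRint
  have hcondL : μ[g * iL | F n] =ᵐ[μ] g * μ[iL | F n] :=
    condExp_mul_of_stronglyMeasurable_left hgm.stronglyMeasurable hgiLint hiLint
  have hR := htransR n
  have hL := htransL n
  -- put everything together
  refine EventuallyEq.symm ?_
  calc μ[M (n+1) | F n]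
      =ᵐ[μ] μ[fun ω => M n ω + (g * r) ω * iR ω | F n] - μ[g * iL | F n] := hcond1
  _ =ᵐ[μ] (μ[M n | F n] + μ[(g * r) * iR | F n]) - μ[g * iL | F n] := by
      filter_upwards [hcond2] with ω hω
      simp only [Pi.sub_apply]; rw [hω]
  _ =ᵐ[μ] M n := by
      filter_upwards [hcondR, hcondL, hR, hL] with ω hωR hωL hωR' hωL'
      simp only [Pi.sub_apply, Pi.add_apply, hcondM]
      rw [hωR, hωL]
      simp only [Pi.mul_apply]
      rw [hωR', hωL']
      have hwp : (0:ℝ) < w (visits X n (X n ω + 1) ω) := hwpos _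
      have hwmv : (0:ℝ) < w (visits X n (X n ω - 1) ω) := hwpos _
      have hsumpos : (0:ℝ) < w (visits X n (X n ω + 1) ω) + w (visits X n (X n ω - 1) ω) :=
        add_pos hwp hwmv
      rw [hg, hr]
      field_simp
      ring
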